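/- For every k ≥ 1, the relation F_k = {(w,w') : d_F(w,w') ≤ k} over a binary (or larger) alphabet is not a recognizable relation; that is, there is no finite index set I and recognizable sets T_i, U_i ⊆ A* with F_k = ⋃_{i∈I} T_i × U_i. -/

import Mathlib

noncomputable def maxFacLen {A : Type*} (w w' : List A) : ℕ :=
  sSup {n | ∃ f : List A, f.length = n ∧ f <:+: w ∧ f <:+: w'}

noncomputable def dF {A : Type*} (w w' : List A) : ℤ :=
  (w.length : ℤ) + w'.length - 2 * maxFacLen w w'

/-- A subset of `A*` is recognizable (regular) if it is accepted by a finite automaton. -/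
def IsRecognizable {A : Type*} (L : Set (List A)) : Prop :=
  ∃ (σ : Type) (_ : Fintype σ) (M : DFA A σ), M.accepts = L

lemma maxFacLen_self {A : Type*} (w : List A) : maxFacLen w w = w.length := by
  unfold maxFacLen
  have hset : {n | ∃ f : List A, f.length = n ∧ f <:+: w ∧ f <:+: w} = Set.Iic w.length := by
    ext n
    simp only [Set.mem_setOf_eq, Set.mem_Iic]
    constructor
    · rintro ⟨f, rfl, hf, -⟩
      exact hf.length_le
    · intro hn
      exact ⟨w.take n, by simp [List.length_take, min_eq_left hn],
        (List.take_prefix n w).isInfix, (List.take_prefix n w).isInfix⟩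
  rw [hset, csSup_Iic]

lemma replicate_infix {A : Type*} (a : A) {n p : ℕ} (h : n ≤ p) :
    List.replicate n a <:+: List.replicate p a := by
  refine ⟨[], List.replicate (p - n) a, ?_⟩
  rw [List.nil_append, ← List.replicate_add, Nat.add_sub_cancel' h]

lemma maxFacLen_replicate {A : Type*} (a : A) (p q : ℕ) :
    maxFacLen (List.replicate p a) (List.replicate q a) = min p q := by
  unfold maxFacLen
  have hset : {n | ∃ f : List A, f.length = n ∧ f <:+: List.replicate p a ∧
      f <:+: List.replicate q a} = Set.Iic (min p q) := by
    ext n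
    simp only [Set.mem_setOf_eq, Set.mem_Iic, le_min_iff]
    constructor
    · rintro ⟨f, rfl, hf, hf'⟩
      have h1 := hf.length_le
      have h2 := hf'.length_le
      simp [List.length_replicate] at h1 h2
      exact ⟨h1, h2⟩
    · rintro ⟨h1, h2⟩
      exact ⟨List.replicate n a, List.length_replicate,
        replicate_infix a h1, replicate_infix a h2⟩
  rw [hset, csSup_Iic]

/-- For every `k ≥ 1`, the relation `F_k` over an alphabet with at least two letters
is not a recognizable relation. -/
theorem Frel_not_recognizable {A : Type*} [Fintype A] (hA : 2 ≤ Fintype.card A)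
    (k : ℕ) (hk : 1 ≤ k) :
    ¬ ∃ (I : Type) (_ : Fintype I) (T U : I → Set (List A)),
        (∀ i, IsRecognizable (T i) ∧ IsRecognizable (U i)) ∧
        (∀ w w' : List A, dF w w' ≤ (k : ℤ) ↔ ∃ i, w ∈ T i ∧ w' ∈ U i) := by
  rintro ⟨I, hI, T, U, -, hiff⟩
  have : Nonempty A := Fintype.card_pos_iff.mp (by omega)
  obtain ⟨a⟩ := this
  set w : ℕ → List A := fun n => List.replicate (n * (k + 1)) a with hw
  -- each diagonal pair is in the relation
  have hdiag : ∀ n, dF (w n) (w n) ≤ (k : ℤ) := by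
    intro n
    have : dF (w n) (w n) = 0 := by
      unfold dF
      rw [maxFacLen_self]
      ring
    rw [this]
    exact_mod_cast Nat.zero_le k
  -- choose an index for each n
  have hch : ∀ n, ∃ i, w n ∈ T i ∧ w n ∈ U i := fun n => (hiff _ _).mp (hdiag n)
  choose g hg1 hg2 using hch
  haveI : Finite I := hI.finite
  obtain ⟨n, m, hnm, hgnm⟩ := Finite.exists_ne_map_eq_of_infinite g
  -- so (w n, w m) is in the relation
  have hrel : dF (w n) (w m) ≤ (k : ℤ) :=
    (hiff _ _).mpr ⟨g n, hg1 n, hgnm ▸ hg2 m⟩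
  -- but dF (w n) (w m) = |n - m| * (k+1) ≥ k + 1
  have hcalc : dF (w n) (w m) =
      (n * (k + 1) : ℤ) + (m * (k + 1) : ℤ) - 2 * min (n * (k + 1)) (m * (k + 1)) := by
    unfold dF
    rw [hw]
    simp only [List.length_replicate, maxFacLen_replicate]
    push_cast [Nat.cast_min]
    ring_nf
  have hmin : ((min (n * (k + 1)) (m * (k + 1)) : ℕ) : ℤ)
      = min ((n * (k + 1) : ℕ) : ℤ) ((m * (k + 1) : ℕ) : ℤ) := by push_cast; ring_nf
  rcases Nat.lt_or_ge n m with h | h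
  · have hlt : n + 1 ≤ m := h
    have : (k : ℤ) + 1 ≤ dF (w n) (w m) := by
      rw [hcalc]
      have hmin' : min ((n : ℤ) * (k + 1)) ((m : ℤ) * (k + 1)) = (n : ℤ) * (k + 1) := by
        apply min_eq_left
        have : (n : ℤ) ≤ m := by exact_mod_cast h.le
        nlinarith
      push_cast
      rw [hmin']
      have : (n : ℤ) + 1 ≤ m := by exact_mod_cast hlt
      nlinarith
    omega
  · have hne : m < n := lt_of_le_of_ne h (fun e => hnm e.symm)
    have hlt : m + 1 ≤ n := hne
    have : (k : ℤ) + 1 ≤ dF (w n) (w m) := by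
      rw [hcalc]
      have hmin' : min ((n : ℤ) * (k + 1)) ((m : ℤ) * (k + 1)) = (m : ℤ) * (k + 1) := by
        apply min_eq_right
        have : (m : ℤ) ≤ n := by exact_mod_cast hne.le
        nlinarith
      push_cast
      rw [hmin']
      have : (m : ℤ) + 1 ≤ n := by exact_mod_cast hlt
      nlinarith
    omega
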